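/- Let k ≥ 3 be an integer and let j be an integer with 2 ≤ j ≤ k-1. Let 0 ≤ a < b ≤ 1. If b ≤ (k-j)/k, or if a ≥ j/k, then the Hausdorff dimension of W_k(a,b) is at least (log j)/(log k). -/

import Mathlib

open scoped ENNReal
open scoped NNReal

/-- The `k`-transformation `x ↦ k·x mod 1`. -/
noncomputable def Tmap (k : ℕ) (x : ℝ) : ℝ := Int.fract ((k : ℝ) * x)

/-- The survivor set of the `k`-transformation with hole `(a,b)`. -/
def W (k : ℕ) (a b : ℝ) : Set ℝ :=
  {x | x ∈ Set.Ico (0 : ℝ) 1 ∧ ∀ n : ℕ, (Tmap k)^[n] x ∉ Set.Ioo a b}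

/-- The generalized Cantor set `C_k`. -/
def Ck (k : ℕ) : Set ℝ :=
  {x | ∃ a : ℕ → ℕ, (∀ n, a n = 0 ∨ a n = k - 1) ∧
    x = ∑' n : ℕ, (a n : ℝ) / (k : ℝ) ^ (n + 1)}

/-- The `n`-th `k`-ary digit of `x`. -/
noncomputable def digit (k : ℕ) (n : ℕ) (x : ℝ) : ℤ :=
  ⌊(k : ℝ) ^ (n + 1) * x⌋ % (k : ℤ)

open Classical in
/-- The generalized Cantor function `g_k`. -/
noncomputable def gk (k : ℕ) (x : ℝ) : ℝ :=
  if x = 1 then 1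
  else if ∀ n, digit k n x = 0 ∨ digit k n x = (k : ℤ) - 1 then
    ∑' n : ℕ, (digit k n x : ℝ) / (((k : ℝ) - 1) * 2 ^ (n + 1))
  else
    (∑ n ∈ Finset.range (sInf {n : ℕ | ¬(digit k n x = 0 ∨ digit k n x = (k : ℤ) - 1)}),
      (digit k n x : ℝ) / (((k : ℝ) - 1) * 2 ^ (n + 1))) +
    1 / 2 ^ (sInf {n : ℕ | ¬(digit k n x = 0 ∨ digit k n x = (k : ℤ) - 1)} + 1)

/-- The Thue–Morse sequence: parity of the number of 1s in the binary expansion. -/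
def tm (n : ℕ) : ℕ := (Nat.digits 2 n).sum % 2

namespace St4

open Real

lemma summable_aux {K : ℝ} (hK : 1 < K) {c : ℕ → ℝ} {M : ℝ} (hc : ∀ n, |c n| ≤ M) :
    Summable (fun n : ℕ => c n / K ^ (n + 1)) := by
  have h0 : 0 ≤ K⁻¹ := by positivity
  have h1 : K⁻¹ < 1 := by
    rw [inv_lt_one_iff₀]; right; exact hK
  have hg : Summable (fun n : ℕ => (M * K⁻¹) * K⁻¹ ^ n) :=
    (summable_geometric_of_lt_one h0 h1).mul_left _
  refine Summable.of_norm_bounded hg ?_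
  intro n
  have hK0 : (0:ℝ) < K := by linarith
  have hpow : (0:ℝ) < K ^ (n+1) := by positivity
  rw [Real.norm_eq_abs, abs_div, abs_of_pos hpow, div_le_iff₀ hpow]
  have : (M * K⁻¹) * K⁻¹ ^ n * K ^ (n+1) = M := by
    rw [inv_pow, pow_succ]
    field_simp
  rw [this]
  exact hc n

lemma tsum_abs_le {K : ℝ} (hK : 1 < K) {c : ℕ → ℝ} {M : ℝ} (hc : ∀ n, |c n| ≤ M) :
    |∑' n : ℕ, c n / K ^ (n + 1)| ≤ M / (K - 1) := by
  have h0 : 0 ≤ K⁻¹ := by positivity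
  have h1 : K⁻¹ < 1 := by rw [inv_lt_one_iff₀]; right; exact hK
  have hgs : HasSum (fun n : ℕ => (M * K⁻¹) * K⁻¹ ^ n) ((M * K⁻¹) * (1 - K⁻¹)⁻¹) :=
    (hasSum_geometric_of_lt_one h0 h1).mul_left _
  have hval : (M * K⁻¹) * (1 - K⁻¹)⁻¹ = M / (K - 1) := by
    have hK0 : K ≠ 0 := by linarith
    have : 1 - K⁻¹ = (K - 1) / K := by field_simp
    rw [this]
    have h2 : K - 1 ≠ 0 := by intro h; nlinarith
    field_simp
  rw [← hval, ← Real.norm_eq_abs]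
  refine tsum_of_norm_bounded hgs ?_
  intro n
  have hpow : (0:ℝ) < K ^ (n+1) := by positivity
  rw [Real.norm_eq_abs, abs_div, abs_of_pos hpow, div_le_iff₀ hpow]
  have : (M * K⁻¹) * K⁻¹ ^ n * K ^ (n+1) = M := by
    rw [inv_pow, pow_succ]
    field_simp
  rw [this]; exact hc n

lemma tsum_head {K : ℝ} (hK : 1 < K) {c : ℕ → ℝ} {M : ℝ} (hc : ∀ n, |c n| ≤ M)
    (n : ℕ) (h0 : ∀ m < n, c m = 0) :
    ∑' m : ℕ, c m / K ^ (m + 1) = (K ^ n)⁻¹ * ∑' m : ℕ, c (m + n) / K ^ (m + 1) := by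
  have hs := summable_aux hK hc
  rw [← Summable.sum_add_tsum_nat_add n hs]
  have hzero : ∑ m ∈ Finset.range n, c m / K ^ (m + 1) = 0 := by
    apply Finset.sum_eq_zero
    intro m hm
    rw [h0 m (Finset.mem_range.mp hm)]
    simp
  rw [hzero, zero_add, ← tsum_mul_left]
  congr 1
  funext m
  have hK0 : K ≠ 0 := by positivity
  have he : K ^ (m + n + 1) = K ^ (m + 1) * K ^ n := by rw [← pow_add]; ring_nf
  rw [he, div_mul_eq_div_div, div_eq_inv_mul]

lemma tsum_peel {K : ℝ} (hK : 1 < K) {c : ℕ → ℝ} {M : ℝ} (hc : ∀ n, |c n| ≤ M) :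
    ∑' m : ℕ, c m / K ^ (m + 1) = c 0 / K + K⁻¹ * ∑' m : ℕ, c (m + 1) / K ^ (m + 1) := by
  have hs := summable_aux hK hc
  rw [Summable.tsum_eq_zero_add hs]
  simp only [pow_one, zero_add]
  congr 1
  rw [← tsum_mul_left]
  congr 1
  funext m
  have hK0 : K ≠ 0 := by positivity
  have he : K ^ (m + 1 + 1) = K ^ (m + 1) * K := by rw [pow_succ]
  rw [he, div_mul_eq_div_div, div_eq_inv_mul]

noncomputable def phi (k d : ℕ) (ω : ℕ → ℕ) : ℝ := ∑' n : ℕ, ((d : ℝ) + ω n) / (k : ℝ) ^ (n + 1)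

variable {k j d : ℕ}

set_option maxHeartbeats 1000000 in
lemma key (hk : 2 ≤ k) (hj : 2 ≤ j) (hjk : j + 1 ≤ k) (hd : d + j ≤ k)
    (ω ω' : ℕ → ℕ) (hω : ∀ n, ω n < j) (hω' : ∀ n, ω' n < j) :
    |(∑' n : ℕ, (ω n : ℝ) / (j : ℝ) ^ (n + 1)) - ∑' n : ℕ, (ω' n : ℝ) / (j : ℝ) ^ (n + 1)|
      ≤ (k : ℝ) ^ 2 * |phi k d ω - phi k d ω'| ^ (Real.log j / Real.log k) := by
  have hj1 : (1 : ℝ) < j := by exact_mod_cast hj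
  have hk1 : (1 : ℝ) < k := by exact_mod_cast (by omega : 2 ≤ k)
  have hk0 : (0 : ℝ) < k := by linarith
  have hj0 : (0 : ℝ) < j := by linarith
  have hjkR : (j : ℝ) + 1 ≤ k := by exact_mod_cast hjk
  have hdR : (d : ℝ) + j ≤ k := by exact_mod_cast hd
  set r : ℝ := Real.log j / Real.log k with hr
  have hlogk : 0 < Real.log k := Real.log_pos hk1
  have hlogj : 0 < Real.log j := Real.log_pos hj1
  have hr0 : 0 ≤ r := le_of_lt (div_pos hlogj hlogk)
  have hkr : (k : ℝ) ^ r = (j : ℝ) := by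
    rw [hr, Real.rpow_def_of_pos hk0, mul_comm, div_mul_cancel₀ _ (ne_of_gt hlogk),
      Real.exp_log hj0]
  by_cases hcase : ω = ω'
  · subst hcase
    simp only [sub_self, abs_zero]
    positivity
  · have hex : ∃ n, ω n ≠ ω' n := by
      by_contra hcon
      push_neg at hcon
      exact hcase (funext hcon)
    set n := Nat.find hex with hn
    have hne : ω n ≠ ω' n := Nat.find_spec hex
    have hmin : ∀ m < n, ω m = ω' m := fun m hm => not_not.mp (Nat.find_min hex hm)
    set c : ℕ → ℝ := fun m => (ω m : ℝ) - ω' m with hc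
    have hωb : ∀ m, ((ω m : ℝ)) ≤ (j : ℝ) - 1 := by
      intro m
      have : (ω m : ℕ) + 1 ≤ j := hω m
      have : ((ω m : ℕ) : ℝ) + 1 ≤ j := by exact_mod_cast this
      linarith
    have hω'b : ∀ m, ((ω' m : ℝ)) ≤ (j : ℝ) - 1 := by
      intro m
      have : (ω' m : ℕ) + 1 ≤ j := hω' m
      have : ((ω' m : ℕ) : ℝ) + 1 ≤ j := by exact_mod_cast this
      linarith
    have hcb : ∀ m, |c m| ≤ (j : ℝ) - 1 := by
      intro m
      rw [hc, abs_sub_le_iff]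
      constructor
      · have := hω'b m; have h2 := hωb m
        have : (0:ℝ) ≤ (ω' m : ℝ) := by positivity
        linarith [hωb m]
      · have : (0:ℝ) ≤ (ω m : ℝ) := by positivity
        linarith [hω'b m]
    have h0 : ∀ m < n, c m = 0 := by
      intro m hm
      rw [hc]
      simp [hmin m hm]
    have hc1 : 1 ≤ |c n| := by
      have hne' : ((ω n : ℤ)) - (ω' n : ℤ) ≠ 0 := by
        rw [sub_ne_zero]
        exact_mod_cast hne
      have h1 : (1 : ℤ) ≤ |((ω n : ℤ)) - (ω' n : ℤ)| := Int.one_le_abs hne'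
      have : ((1 : ℤ) : ℝ) ≤ (|((ω n : ℤ)) - (ω' n : ℤ)| : ℝ) := by exact_mod_cast h1
      rw [hc]
      push_cast at this ⊢
      convert this using 2
    -- LHS bound
    have hsub : (∑' m : ℕ, (ω m : ℝ) / (j : ℝ) ^ (m + 1)) - ∑' m : ℕ, (ω' m : ℝ) / (j : ℝ) ^ (m + 1)
        = ∑' m : ℕ, c m / (j : ℝ) ^ (m + 1) := by
      rw [← Summable.tsum_sub (summable_aux hj1 (M := (j:ℝ) - 1) (fun m => by
          rw [abs_of_nonneg (by positivity)]; exact hωb m))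
        (summable_aux hj1 (M := (j:ℝ) - 1) (fun m => by
          rw [abs_of_nonneg (by positivity)]; exact hω'b m))]
      congr 1
      funext m
      rw [hc, sub_div]
    have hLHS : |(∑' m : ℕ, (ω m : ℝ) / (j : ℝ) ^ (m + 1)) - ∑' m : ℕ, (ω' m : ℝ) / (j : ℝ) ^ (m + 1)|
        ≤ ((j : ℝ) ^ n)⁻¹ := by
      rw [hsub, tsum_head hj1 hcb n h0, abs_mul, abs_inv, abs_pow, abs_of_pos hj0]
      have h2 := tsum_abs_le hj1 (c := fun m => c (m + n)) (fun m => hcb (m + n))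
      have h3 : ((j:ℝ) - 1) / ((j:ℝ) - 1) = 1 := div_self (by linarith)
      rw [h3] at h2
      calc ((j:ℝ) ^ n)⁻¹ * |∑' m : ℕ, c (m + n) / (j:ℝ) ^ (m + 1)|
          ≤ ((j:ℝ) ^ n)⁻¹ * 1 := by gcongr
        _ = ((j:ℝ) ^ n)⁻¹ := mul_one _
    -- RHS lower bound
    have hphisub : phi k d ω - phi k d ω' = ∑' m : ℕ, c m / (k : ℝ) ^ (m + 1) := by
      rw [phi, phi, ← Summable.tsum_sub (summable_aux hk1 (M := (k:ℝ) - 1) (fun m => by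
          rw [abs_of_nonneg (by positivity)]; linarith [hωb m, hdR]))
        (summable_aux hk1 (M := (k:ℝ) - 1) (fun m => by
          rw [abs_of_nonneg (by positivity)]; linarith [hω'b m, hdR]))]
      congr 1
      funext m
      rw [hc, div_sub_div_same]
      congr 1
      ring
    have hΔlb : (((k : ℝ)) ^ (n + 2))⁻¹ ≤ |phi k d ω - phi k d ω'| := by
      rw [hphisub, tsum_head hk1 hcb n h0, abs_mul, abs_inv, abs_pow, abs_of_pos hk0]
      set R := ∑' m : ℕ, c (m + 1 + n) / (k : ℝ) ^ (m + 1) with hR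
      have hpeel := tsum_peel hk1 (c := fun m => c (m + n)) (fun m => hcb (m + n))
      simp only [Nat.zero_add] at hpeel
      have hT : ∑' m : ℕ, c (m + n) / (k:ℝ) ^ (m + 1) = c n / k + (k:ℝ)⁻¹ * R := by
        rw [hpeel]
      have hRb : |R| ≤ ((j:ℝ) - 1) / ((k:ℝ) - 1) :=
        tsum_abs_le hk1 (c := fun m => c (m + 1 + n)) (fun m => hcb (m + 1 + n))
      have hTlb : ((k:ℝ)^2)⁻¹ ≤ |∑' m : ℕ, c (m + n) / (k:ℝ) ^ (m + 1)| := by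
        rw [hT]
        have h4 : |c n / k| - |-((k:ℝ)⁻¹ * R)| ≤ |c n / k - -((k:ℝ)⁻¹ * R)| :=
          abs_sub_abs_le_abs_sub _ _
        rw [sub_neg_eq_add, abs_neg, abs_div, abs_of_pos hk0, abs_mul,
          abs_inv, abs_of_pos hk0] at h4
        have h5 : ((k:ℝ)^2)⁻¹ ≤ |c n| / k - (k:ℝ)⁻¹ * |R| := by
          have h6 : (k:ℝ)⁻¹ * |R| ≤ (k:ℝ)⁻¹ * (((j:ℝ) - 1) / ((k:ℝ) - 1)) := by gcongr
          have h7 : 1 / (k:ℝ) ≤ |c n| / k := by gcongr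
          have h8 : ((k:ℝ)^2)⁻¹ ≤ 1 / (k:ℝ) - (k:ℝ)⁻¹ * (((j:ℝ) - 1) / ((k:ℝ) - 1)) := by
            have hkne : (k:ℝ) ≠ 0 := ne_of_gt hk0
            have hkm1 : (0:ℝ) < (k:ℝ) - 1 := by linarith
            have hkm1ne : (k:ℝ) - 1 ≠ 0 := ne_of_gt hkm1
            have he : 1 / (k:ℝ) - (k:ℝ)⁻¹ * (((j:ℝ) - 1) / ((k:ℝ) - 1))
                = ((k:ℝ) - j) / ((k:ℝ) * ((k:ℝ) - 1)) := by
              field_simp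
              ring
            rw [he, inv_eq_one_div,
              div_le_div_iff₀ (by positivity) (by nlinarith : (0:ℝ) < (k:ℝ) * ((k:ℝ) - 1))]
            nlinarith
          linarith
        linarith
      calc ((k:ℝ) ^ (n + 2))⁻¹ = ((k:ℝ) ^ n)⁻¹ * ((k:ℝ)^2)⁻¹ := by
            rw [pow_add, mul_inv]
        _ ≤ ((k:ℝ) ^ n)⁻¹ * |∑' m : ℕ, c (m + n) / (k:ℝ) ^ (m + 1)| := by gcongr
    -- rpow computation
    have hpowr : (((k : ℝ) ^ (n + 2))⁻¹) ^ r = (((j : ℝ)) ^ (n + 2))⁻¹ := by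
      have hknn : (0:ℝ) ≤ (k:ℝ) := le_of_lt hk0
      calc (((k : ℝ) ^ (n + 2))⁻¹) ^ r
          = ((k : ℝ) ^ (-((n + 2 : ℕ) : ℝ))) ^ r := by
            rw [Real.rpow_neg hknn, Real.rpow_natCast]
        _ = (k : ℝ) ^ (-((n + 2 : ℕ) : ℝ) * r) := by rw [← Real.rpow_mul hknn]
        _ = ((k : ℝ) ^ r) ^ (-((n + 2 : ℕ) : ℝ)) := by
            rw [mul_comm, Real.rpow_mul hknn]
        _ = (j : ℝ) ^ (-((n + 2 : ℕ) : ℝ)) := by rw [hkr]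
        _ = (((j : ℝ)) ^ (n + 2))⁻¹ := by
            rw [Real.rpow_neg (le_of_lt hj0), Real.rpow_natCast]
    have hmono : (((j : ℝ)) ^ (n + 2))⁻¹ ≤ |phi k d ω - phi k d ω'| ^ r := by
      rw [← hpowr]
      exact Real.rpow_le_rpow (by positivity) hΔlb hr0
    have hjk' : (j : ℝ) ≤ k := by linarith
    calc |(∑' m : ℕ, (ω m : ℝ) / (j : ℝ) ^ (m + 1)) - ∑' m : ℕ, (ω' m : ℝ) / (j : ℝ) ^ (m + 1)|
        ≤ ((j : ℝ) ^ n)⁻¹ := hLHS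
      _ = 1 * ((j : ℝ) ^ n)⁻¹ := (one_mul _).symm
      _ ≤ ((k : ℝ) ^ 2 * (((j : ℝ)) ^ 2)⁻¹) * ((j : ℝ) ^ n)⁻¹ := by
          refine mul_le_mul_of_nonneg_right ?_ (by positivity)
          rw [← div_eq_mul_inv, le_div_iff₀ (by positivity), one_mul]
          exact pow_le_pow_left₀ (by positivity) hjk' 2
      _ = (k : ℝ) ^ 2 * (((j : ℝ)) ^ (n + 2))⁻¹ := by
          rw [pow_add, mul_inv]
          ring
      _ ≤ (k : ℝ) ^ 2 * |phi k d ω - phi k d ω'| ^ r := by gcongr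

def SS (k j d : ℕ) : Set ℝ := {x | ∃ ω : ℕ → ℕ, (∀ n, ω n < j) ∧ x = phi k d ω}

section bounds

variable {k j d : ℕ} {ω : ℕ → ℕ}

lemma hK_real (hk : 2 ≤ k) : 1 < (k : ℝ) := by exact_mod_cast hk

lemma abs_bound (hj : 1 ≤ j) (hd : d + j ≤ k) (hω : ∀ n, ω n < j) (n : ℕ) :
    |(d : ℝ) + ω n| ≤ (k : ℝ) - 1 := by
  have h1 : d + ω n ≤ k - 1 := by have := hω n; omega
  have h2 : (0:ℝ) ≤ (d : ℝ) + ω n := by positivity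
  rw [abs_of_nonneg h2]
  have hk1 : 1 ≤ k := by omega
  have : ((d + ω n : ℕ) : ℝ) ≤ ((k - 1 : ℕ) : ℝ) := by exact_mod_cast h1
  push_cast [Nat.cast_sub hk1] at this
  linarith

lemma phi_nonneg (hk : 2 ≤ k) : 0 ≤ phi k d ω := by
  apply tsum_nonneg
  intro n
  positivity

lemma phi_le_one (hk : 2 ≤ k) (hj : 1 ≤ j) (hd : d + j ≤ k) (hω : ∀ n, ω n < j) :
    phi k d ω ≤ 1 := by
  have h := tsum_abs_le (hK_real hk) (abs_bound hj hd hω)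
  have hk1 : (1:ℝ) < k := hK_real hk
  calc phi k d ω ≤ |phi k d ω| := le_abs_self _
    _ ≤ ((k:ℝ) - 1) / ((k:ℝ) - 1) := h
    _ = 1 := by rw [div_self]; linarith

lemma abs_bound' (hj : 1 ≤ j) (hω : ∀ n, ω n < j) (n : ℕ) :
    |(d : ℝ) + ω n| ≤ (d : ℝ) + j - 1 := by
  have h1 : ω n ≤ j - 1 := by have := hω n; omega
  have h2 : (0:ℝ) ≤ (d : ℝ) + ω n := by positivity
  rw [abs_of_nonneg h2]
  have : ((ω n : ℕ) : ℝ) ≤ ((j - 1 : ℕ) : ℝ) := by exact_mod_cast h1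
  push_cast [Nat.cast_sub hj] at this
  linarith

lemma phi_ub (hk : 2 ≤ k) (hj : 1 ≤ j) (hω : ∀ n, ω n < j) :
    phi k d ω ≤ ((d : ℝ) + j - 1) / ((k : ℝ) - 1) :=
  (le_abs_self _).trans (tsum_abs_le (hK_real hk) (abs_bound' hj hω))

lemma phi_lb (hk : 2 ≤ k) (hj : 1 ≤ j) (hd : d + j ≤ k) (hω : ∀ n, ω n < j) :
    (d : ℝ) / k ≤ phi k d ω := by
  have hpeel := tsum_peel (hK_real hk) (abs_bound hj hd hω)
  have htail : 0 ≤ ∑' m : ℕ, ((d : ℝ) + ω (m + 1)) / (k : ℝ) ^ (m + 1) := by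
    apply tsum_nonneg; intro n; positivity
  have hk0 : (0:ℝ) < k := by positivity
  have h0 : (d : ℝ) / k ≤ ((d : ℝ) + ω 0) / k := by
    gcongr
    exact le_add_of_nonneg_right (by positivity)
  have hkinv : (0:ℝ) ≤ (k:ℝ)⁻¹ := by positivity
  rw [phi]
  rw [hpeel]
  nlinarith [mul_nonneg hkinv htail]

lemma Tmap_SS (hk : 2 ≤ k) (hj : 1 ≤ j) (hd : d + j ≤ k) {x : ℝ} (hx : x ∈ SS k j d) :
    Tmap k x ∈ SS k j d ∨ Tmap k x = 0 := by
  obtain ⟨ω, hω, rfl⟩ := hx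
  set y := phi k d (fun n => ω (n + 1)) with hy
  have hk1 : 1 < (k:ℝ) := hK_real hk
  have hkx : (k : ℝ) * phi k d ω = ((d + ω 0 : ℕ) : ℝ) + y := by
    have hpeel := tsum_peel hk1 (abs_bound hj hd hω)
    have hk0 : (k:ℝ) ≠ 0 := by positivity
    have hphi : phi k d ω = ((d:ℝ) + ω 0) / k + (k:ℝ)⁻¹ * y := by
      rw [phi, hy, phi]; exact hpeel
    rw [hphi]
    push_cast
    field_simp
  have hy0 : 0 ≤ y := phi_nonneg hk
  have hy1 : y ≤ 1 := phi_le_one hk hj hd (fun n => hω (n + 1))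
  rw [Tmap, hkx]
  rcases lt_or_eq_of_le hy1 with h1 | h1
  · left
    have : Int.fract (((d + ω 0 : ℕ) : ℝ) + y) = y := by
      rw [show ((d + ω 0 : ℕ) : ℝ) = (((d + ω 0 : ℕ) : ℤ) : ℝ) by push_cast; ring,
        Int.fract_intCast_add, Int.fract_eq_self.2 ⟨hy0, h1⟩]
    rw [this]
    exact ⟨fun n => ω (n + 1), fun n => hω (n + 1), rfl⟩
  · right
    rw [h1]
    rw [show ((d + ω 0 : ℕ) : ℝ) + 1 = (((d + ω 0 + 1: ℕ) : ℤ) : ℝ) by push_cast; ring]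
    exact Int.fract_intCast _

end bounds

lemma expand {j : ℕ} (hj : 2 ≤ j) {y : ℝ} (hy0 : 0 ≤ y) (hy1 : y < 1) :
    ∃ ω : ℕ → ℕ, (∀ n, ω n < j) ∧ y = ∑' n : ℕ, (ω n : ℝ) / (j : ℝ) ^ (n + 1) := by
  have hj1 : (1 : ℝ) < j := by exact_mod_cast hj
  have hj0 : (0 : ℝ) < j := by linarith
  set F : ℕ → ℤ := fun n => ⌊(j : ℝ) ^ n * y⌋ with hF
  have hlow : ∀ n, (j : ℤ) * F n ≤ F (n + 1) := by
    intro n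
    apply Int.le_floor.2
    push_cast
    have h1 : ((F n : ℝ)) ≤ (j : ℝ) ^ n * y := Int.floor_le _
    calc (j : ℝ) * (F n : ℝ) ≤ (j : ℝ) * ((j : ℝ) ^ n * y) := by
          exact mul_le_mul_of_nonneg_left h1 (le_of_lt hj0)
      _ = (j : ℝ) ^ (n + 1) * y := by ring
  have hhigh : ∀ n, F (n + 1) < (j : ℤ) * F n + j := by
    intro n
    apply Int.floor_lt.2
    push_cast
    have h1 : (j : ℝ) ^ n * y < (F n : ℝ) + 1 := Int.lt_floor_add_one _
    calc (j : ℝ) ^ (n + 1) * y = (j : ℝ) * ((j : ℝ) ^ n * y) := by ring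
      _ < (j : ℝ) * ((F n : ℝ) + 1) := by
          exact mul_lt_mul_of_pos_left h1 hj0
      _ = (j : ℝ) * (F n : ℝ) + j := by ring
  set ω : ℕ → ℕ := fun n => (F (n + 1) - (j : ℤ) * F n).toNat with hω
  have hωlt : ∀ n, ω n < j := by
    intro n
    have h1 := hlow n
    have h2 := hhigh n
    simp only [hω]
    omega
  have hωcast : ∀ n, (ω n : ℝ) = (F (n + 1) : ℝ) - (j : ℝ) * F n := by
    intro n
    have h1 := hlow n
    have : ((F (n + 1) - (j : ℤ) * F n).toNat : ℤ) = F (n + 1) - (j : ℤ) * F n := by omega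
    rw [hω]
    exact_mod_cast congrArg (fun z : ℤ => (z : ℝ)) this
  have hF0 : F 0 = 0 := by
    rw [hF]
    simp only [pow_zero, one_mul]
    exact Int.floor_eq_zero_iff.2 ⟨hy0, hy1⟩
  have hpartial : ∀ N, ∑ n ∈ Finset.range N, (ω n : ℝ) / (j : ℝ) ^ (n + 1)
      = (F N : ℝ) / (j : ℝ) ^ N := by
    intro N
    have h := Finset.sum_range_sub (f := fun n => (F n : ℝ) / (j : ℝ) ^ n) N
    have heq : ∀ n, (ω n : ℝ) / (j : ℝ) ^ (n + 1)
        = (F (n + 1) : ℝ) / (j : ℝ) ^ (n + 1) - (F n : ℝ) / (j : ℝ) ^ n := by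
      intro n
      rw [hωcast n]
      have hjne : (j : ℝ) ≠ 0 := ne_of_gt hj0
      field_simp
      ring
    calc ∑ n ∈ Finset.range N, (ω n : ℝ) / (j : ℝ) ^ (n + 1)
        = ∑ n ∈ Finset.range N,
            ((F (n + 1) : ℝ) / (j : ℝ) ^ (n + 1) - (F n : ℝ) / (j : ℝ) ^ n) := by
          exact Finset.sum_congr rfl (fun n _ => heq n)
      _ = (F N : ℝ) / (j : ℝ) ^ N - (F 0 : ℝ) / (j : ℝ) ^ 0 := h
      _ = (F N : ℝ) / (j : ℝ) ^ N := by rw [hF0]; simp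
  have hωb : ∀ n, |(ω n : ℝ)| ≤ (j : ℝ) - 1 := by
    intro n
    rw [abs_of_nonneg (by positivity)]
    have : (ω n) + 1 ≤ j := hωlt n
    have : ((ω n : ℕ) : ℝ) + 1 ≤ j := by exact_mod_cast this
    linarith
  have hsum : Summable (fun n : ℕ => (ω n : ℝ) / (j : ℝ) ^ (n + 1)) := summable_aux hj1 hωb
  refine ⟨ω, hωlt, ?_⟩
  have htend := hsum.hasSum.tendsto_sum_nat
  have htend2 : Filter.Tendsto (fun N => ∑ n ∈ Finset.range N, (ω n : ℝ) / (j : ℝ) ^ (n + 1))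
      Filter.atTop (nhds y) := by
    simp only [hpartial]
    have hlb : ∀ N, y - ((j : ℝ)⁻¹) ^ N ≤ (F N : ℝ) / (j : ℝ) ^ N := by
      intro N
      have h1 : (j : ℝ) ^ N * y < (F N : ℝ) + 1 := Int.lt_floor_add_one _
      have hp : (0 : ℝ) < (j : ℝ) ^ N := by positivity
      have h2 : y ≤ ((F N : ℝ) + 1) / (j : ℝ) ^ N := by
        rw [le_div_iff₀ hp]
        nlinarith
      have h3 : ((F N : ℝ) + 1) / (j : ℝ) ^ N - ((j : ℝ)⁻¹) ^ N = (F N : ℝ) / (j : ℝ) ^ N := by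
        rw [inv_pow]
        field_simp
        ring
      linarith
    have hub : ∀ N, (F N : ℝ) / (j : ℝ) ^ N ≤ y := by
      intro N
      have hp : (0 : ℝ) < (j : ℝ) ^ N := by positivity
      rw [div_le_iff₀ hp]
      have := Int.floor_le ((j : ℝ) ^ N * y)
      calc (F N : ℝ) ≤ (j : ℝ) ^ N * y := this
        _ = y * (j : ℝ) ^ N := by ring
    have hinv : Filter.Tendsto (fun N : ℕ => ((j : ℝ)⁻¹) ^ N) Filter.atTop (nhds 0) := by
      apply tendsto_pow_atTop_nhds_zero_of_lt_one (by positivity)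
      rw [inv_lt_one_iff₀]
      right
      exact hj1
    have t1 : Filter.Tendsto (fun N : ℕ => y - ((j : ℝ)⁻¹) ^ N) Filter.atTop (nhds y) := by
      have := Filter.Tendsto.const_sub y hinv
      simpa using this
    exact tendsto_of_tendsto_of_tendsto_of_le_of_le t1 tendsto_const_nhds hlb hub
  exact (tendsto_nhds_unique htend htend2).symm


section main

variable {k j d : ℕ}

open Classical in
noncomputable def psi (k j d : ℕ) (x : ℝ) : ℝ :=
  if h : x ∈ SS k j d then ∑' n : ℕ, ((h.choose n : ℝ)) / (j : ℝ) ^ (n + 1) else 0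

lemma psi_eq (hk : 2 ≤ k) (hj : 2 ≤ j) (hjk : j + 1 ≤ k) (hd : d + j ≤ k)
    {ω : ℕ → ℕ} (hω : ∀ n, ω n < j) :
    psi k j d (phi k d ω) = ∑' n : ℕ, (ω n : ℝ) / (j : ℝ) ^ (n + 1) := by
  have hx : phi k d ω ∈ SS k j d := ⟨ω, hω, rfl⟩
  rw [psi, dif_pos hx]
  obtain ⟨hv, he⟩ := hx.choose_spec
  have hkey := key hk hj hjk hd hx.choose ω hv hω
  rw [← he, sub_self, abs_zero] at hkey
  have hr : Real.log j / Real.log k ≠ 0 := by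
    have hlogk : 0 < Real.log k := Real.log_pos (by exact_mod_cast (by omega : 2 ≤ k))
    have hlogj : 0 < Real.log j := Real.log_pos (by exact_mod_cast hj)
    positivity
  rw [Real.zero_rpow hr, mul_zero] at hkey
  have := abs_nonneg ((∑' n : ℕ, (hx.choose n : ℝ) / (j : ℝ) ^ (n + 1)) -
    ∑' n : ℕ, (ω n : ℝ) / (j : ℝ) ^ (n + 1))
  have heq0 : (∑' n : ℕ, (hx.choose n : ℝ) / (j : ℝ) ^ (n + 1)) -
      ∑' n : ℕ, (ω n : ℝ) / (j : ℝ) ^ (n + 1) = 0 := by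
    apply abs_eq_zero.mp
    linarith
  linarith [sub_eq_zero.mp heq0]

lemma holder (hk : 2 ≤ k) (hj : 2 ≤ j) (hjk : j + 1 ≤ k) (hd : d + j ≤ k) :
    HolderOnWith (Real.toNNReal ((k : ℝ) ^ 2))
      (Real.toNNReal (Real.log j / Real.log k)) (psi k j d) (SS k j d) := by
  intro x hx y hy
  have hlogk : 0 < Real.log k := Real.log_pos (by exact_mod_cast (by omega : 2 ≤ k))
  have hlogj : 0 < Real.log j := Real.log_pos (by exact_mod_cast hj)
  have hr0 : 0 ≤ Real.log j / Real.log k := le_of_lt (div_pos hlogj hlogk)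
  obtain ⟨ω, hω, hxe⟩ := hx
  obtain ⟨ω', hω', hye⟩ := hy
  have hpx : psi k j d x = ∑' n : ℕ, (ω n : ℝ) / (j : ℝ) ^ (n + 1) := by
    rw [hxe]; exact psi_eq hk hj hjk hd hω
  have hpy : psi k j d y = ∑' n : ℕ, (ω' n : ℝ) / (j : ℝ) ^ (n + 1) := by
    rw [hye]; exact psi_eq hk hj hjk hd hω'
  have hkey := key hk hj hjk hd ω ω' hω hω'
  rw [← hxe, ← hye, ← hpx, ← hpy] at hkey
  rw [edist_dist, edist_dist, Real.dist_eq, Real.dist_eq]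
  have hcoe : ((Real.toNNReal (Real.log j / Real.log k) : ℝ≥0) : ℝ)
      = Real.log j / Real.log k := Real.coe_toNNReal _ hr0
  rw [hcoe]
  have h1 : ((Real.toNNReal ((k : ℝ) ^ 2) : ℝ≥0) : ℝ≥0∞) = ENNReal.ofReal ((k : ℝ) ^ 2) := rfl
  rw [h1, ENNReal.ofReal_rpow_of_nonneg (abs_nonneg _) hr0,
    ← ENNReal.ofReal_mul (by positivity)]
  exact ENNReal.ofReal_le_ofReal hkey

lemma main (hk : 3 ≤ k) (hj : 2 ≤ j) (hjk : j + 1 ≤ k) (hd : d + j ≤ k)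
    (a b : ℝ) (ha : 0 ≤ a)
    (hsafe : ∀ x ∈ SS k j d, x ∉ Set.Ioo a b) :
    ENNReal.ofReal (Real.log j / Real.log k) ≤ dimH (W k a b) := by
  have hk2 : 2 ≤ k := by omega
  have hj1 : 1 ≤ j := by omega
  have hlogk : 0 < Real.log k := Real.log_pos (by exact_mod_cast hk2)
  have hlogj : 0 < Real.log j := Real.log_pos (by exact_mod_cast hj)
  -- Step 1: SS ∩ [0,1) ⊆ W
  have hsub : SS k j d ∩ Set.Ico 0 1 ⊆ W k a b := by
    rintro x ⟨hx, hx01⟩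
    refine ⟨hx01, fun n => ?_⟩
    have hit : (Tmap k)^[n] x ∈ SS k j d ∨ (Tmap k)^[n] x = 0 := by
      induction n with
      | zero => exact Or.inl hx
      | succ n ih =>
        rw [Function.iterate_succ_apply']
        rcases ih with h | h
        · exact Tmap_SS hk2 hj1 hd h
        · right
          rw [h, Tmap, mul_zero, Int.fract_zero]
    rcases hit with h | h
    · exact hsafe _ h
    · rw [h]
      rintro ⟨h1, _⟩
      linarith
  -- Step 2: Hölder image argument
  set r : ℝ≥0 := Real.toNNReal (Real.log j / Real.log k) with hrdef
  have hrpos : 0 < r := Real.toNNReal_pos.2 (div_pos hlogj hlogk)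
  have hH := holder hk2 hj hjk hd
  have himg : Set.Ico (0 : ℝ) 1 ⊆ psi k j d '' SS k j d := by
    intro y hy
    obtain ⟨ω, hωlt, hyeq⟩ := expand hj hy.1 hy.2
    exact ⟨phi k d ω, ⟨ω, hωlt, rfl⟩, by rw [psi_eq hk2 hj hjk hd hωlt, ← hyeq]⟩
  have h1 : (1 : ℝ≥0∞) ≤ dimH (psi k j d '' SS k j d) := by
    have hIco : dimH (Set.Ico (0 : ℝ) 1) = 1 := by
      rw [Real.dimH_of_nonempty_interior (by
        rw [interior_Ico]
        exact ⟨1/2, by norm_num⟩)]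
      norm_num
    exact hIco ▸ dimH_mono himg
  have h2 := hH.dimH_image_le hrpos
  have h3 : (r : ℝ≥0∞) ≤ dimH (SS k j d) := by
    have h4 : (1 : ℝ≥0∞) ≤ dimH (SS k j d) / r := le_trans h1 h2
    rw [ENNReal.le_div_iff_mul_le (Or.inl (by exact_mod_cast ne_of_gt hrpos))
      (Or.inl ENNReal.coe_ne_top)] at h4
    simpa using h4
  -- Step 3: remove the point 1
  have h5 : dimH (SS k j d) ≤ dimH (SS k j d ∩ Set.Ico 0 1) := by
    have hcover : SS k j d ⊆ (SS k j d ∩ Set.Ico 0 1) ∪ {1} := by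
      intro x hx
      obtain ⟨ω, hω, rfl⟩ := hx
      have h0x : 0 ≤ phi k d ω := phi_nonneg hk2
      have h1x : phi k d ω ≤ 1 := phi_le_one hk2 hj1 hd hω
      rcases eq_or_lt_of_le h1x with h | h
      · right; simp [h]
      · left; exact ⟨⟨ω, hω, rfl⟩, ⟨h0x, h⟩⟩
    calc dimH (SS k j d) ≤ dimH ((SS k j d ∩ Set.Ico 0 1) ∪ {1}) := dimH_mono hcover
      _ = max (dimH (SS k j d ∩ Set.Ico 0 1)) (dimH ({1} : Set ℝ)) := dimH_union _ _
      _ = dimH (SS k j d ∩ Set.Ico 0 1) := by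
          rw [dimH_subsingleton Set.subsingleton_singleton, max_eq_left zero_le]
  have hfin : ENNReal.ofReal (Real.log j / Real.log k) = (r : ℝ≥0∞) := rfl
  rw [hfin]
  exact le_trans h3 (le_trans h5 (dimH_mono hsub))

end main
end St4

/-- if `b ≤ (k-j)/k` or `a ≥ j/k`, then `dimH W_k(a,b) ≥ log j / log k`. -/
theorem stmt4 (k j : ℕ) (hk : 3 ≤ k) (hj : 2 ≤ j) (hjk : j ≤ k - 1)
    (a b : ℝ) (ha : 0 ≤ a) (hab : a < b) (hb : b ≤ 1)
    (h : b ≤ ((k : ℝ) - (j : ℝ)) / k ∨ (j : ℝ) / k ≤ a) :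
    ENNReal.ofReal (Real.log j / Real.log k) ≤ dimH (W k a b) := by
  have hk2 : 2 ≤ k := by omega
  have hjk' : j + 1 ≤ k := by omega
  have hj1 : 1 ≤ j := by omega
  have hkR : (1 : ℝ) < k := by exact_mod_cast hk2
  have hjR : (1 : ℝ) < j := by exact_mod_cast hj
  have hjkR : (j : ℝ) + 1 ≤ k := by exact_mod_cast hjk'
  rcases h with hcase | hcase
  · -- hole is below (k-j)/k : use digits {k-j, ..., k-1}
    apply St4.main hk hj hjk' (d := k - j) (by omega) a b ha
    intro x hx
    obtain ⟨ω, hω, rfl⟩ := hx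
    have hlb := St4.phi_lb (d := k - j) hk2 hj1 (by omega) hω
    have hcast : (((k - j : ℕ)) : ℝ) = (k : ℝ) - j := by
      have : j ≤ k := by omega
      exact Nat.cast_sub this
    rw [hcast] at hlb
    rintro ⟨_, hxb⟩
    have : b ≤ St4.phi k (k - j) ω := le_trans hcase hlb
    linarith
  · -- hole is above j/k : use digits {0, ..., j-1}
    apply St4.main hk hj hjk' (d := 0) (by omega) a b ha
    intro x hx
    obtain ⟨ω, hω, rfl⟩ := hx
    have hub := St4.phi_ub (d := 0) hk2 hj1 hω
    simp only [Nat.cast_zero, zero_add] at hub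
    have hle : ((j : ℝ) - 1) / ((k : ℝ) - 1) ≤ (j : ℝ) / k := by
      rw [div_le_div_iff₀ (by linarith) (by linarith)]
      nlinarith
    rintro ⟨hax, _⟩
    have : St4.phi k 0 ω ≤ a := le_trans hub (le_trans hle hcase)
    linarith
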